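/- Let b > 0 and s ∈ ℕ with s ≥ 1. There exists a constant C > 0 (depending on b and s) such that for all φ ∈ H^s((0,b); ℂ), the trace value at the endpoint satisfies |φ(b)| ≤ C ‖φ‖_{L²(0,b)}^{1 − 1/(2s)} ‖φ‖_{H^s(0,b)}^{1/(2s)}. -/

import Mathlib

open MeasureTheory Real

lemma hasDerivAt_mono' (c : ℂ) (m : ℕ) (t : ℝ) :
    HasDerivAt (fun x : ℝ => ((x : ℂ) - c) ^ m)
      ((m : ℂ) * ((t : ℂ) - c) ^ (m - 1)) t := by
  have h : HasDerivAt (fun z : ℂ => (z - c) ^ m)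
      ((m : ℂ) * (((t : ℝ) : ℂ) - c) ^ (m - 1) * 1) ((t : ℝ) : ℂ) :=
    ((hasDerivAt_id _).sub_const c).pow m
  simpa using h.comp_ofReal

lemma contDiff_ofReal {n : WithTop ℕ∞} : ContDiff ℝ n (fun x : ℝ => (x : ℂ)) :=
  Complex.ofRealCLM.contDiff

lemma contDiff_mono' (C c : ℂ) (m : ℕ) {n : WithTop ℕ∞} :
    ContDiff ℝ n (fun x : ℝ => C * ((x : ℂ) - c) ^ m) :=
  contDiff_const.mul ((contDiff_ofReal.sub contDiff_const).pow m)

lemma iteratedDeriv_mono' (C c : ℂ) (m : ℕ) : ∀ (k : ℕ),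
    iteratedDeriv k (fun x : ℝ => C * ((x : ℂ) - c) ^ m)
      = fun x : ℝ => (C * (m.descFactorial k : ℂ)) * ((x : ℂ) - c) ^ (m - k)
  | 0 => by simp
  | (k + 1) => by
    rw [iteratedDeriv_succ, iteratedDeriv_mono' C c m k]
    funext t
    have h := ((hasDerivAt_mono' c (m - k) t).const_mul
      (C * (m.descFactorial k : ℂ))).deriv
    rw [h, Nat.descFactorial_succ, Nat.cast_mul, ← Nat.sub_sub]
    ring

lemma iteratedDeriv_add' {n : ℕ} {f g : ℝ → ℂ} (hf : ContDiff ℝ n f) (hg : ContDiff ℝ n g)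
    (x : ℝ) :
    iteratedDeriv n (fun t => f t + g t) x = iteratedDeriv n f x + iteratedDeriv n g x := by
  have h : (fun t => f t + g t) = f + g := rfl
  rw [h, iteratedDeriv_eq_iteratedFDeriv, iteratedDeriv_eq_iteratedFDeriv,
    iteratedDeriv_eq_iteratedFDeriv, iteratedFDeriv_add_apply hf.contDiffAt hg.contDiffAt]
  rfl

lemma iteratedDeriv_sum_range {n : ℕ} (N : ℕ) (F : ℕ → ℝ → ℂ)
    (hF : ∀ i, ContDiff ℝ n (F i)) (x : ℝ) :
    iteratedDeriv n (fun t => ∑ i ∈ Finset.range N, F i t) x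
      = ∑ i ∈ Finset.range N, iteratedDeriv n (F i) x := by
  induction N with
  | zero =>
      simp only [Finset.range_zero, Finset.sum_empty]
      have h : (fun _ : ℝ => (0 : ℂ)) = fun t : ℝ => ((0:ℂ) * ((t:ℂ) - 0) ^ 0) := by
        funext t; simp
      rw [h, iteratedDeriv_mono']
      simp
  | succ N ih =>
      have hsum : ContDiff ℝ n (fun t => ∑ i ∈ Finset.range N, F i t) :=
        ContDiff.sum fun i _ => hF i
      simp only [Finset.sum_range_succ]
      rw [iteratedDeriv_add' hsum (hF N), ih]

lemma iteratedDeriv_sum_mono (N j : ℕ) (C : ℕ → ℂ) (cc : ℂ) (m : ℕ → ℕ) (x : ℝ) :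
    iteratedDeriv j (fun t : ℝ => ∑ k ∈ Finset.range N, C k * ((t : ℂ) - cc) ^ (m k)) x
      = ∑ k ∈ Finset.range N, (C k * ((m k).descFactorial j : ℂ)) * ((x : ℂ) - cc) ^ (m k - j) := by
  have h1 := iteratedDeriv_sum_range (n := j) N
    (fun k (u : ℝ) => C k * ((u : ℂ) - cc) ^ (m k)) (fun i => contDiff_mono' _ _ _) x
  have h2 : ∀ k ∈ Finset.range N,
      iteratedDeriv j (fun (u : ℝ) => C k * ((u : ℂ) - cc) ^ (m k)) x
        = (C k * ((m k).descFactorial j : ℂ)) * ((x : ℂ) - cc) ^ (m k - j) := by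
    intro k _
    rw [iteratedDeriv_mono']
  exact h1.trans (Finset.sum_congr rfl h2)

lemma ibp (a b : ℝ) : ∀ (n : ℕ) (u v : ℝ → ℂ), ContDiff ℝ n u → ContDiff ℝ n v →
    ∫ x in a..b, iteratedDeriv n u x * v x
      = (∑ j ∈ Finset.range n, (-1 : ℂ) ^ j *
          (iteratedDeriv (n - 1 - j) u b * iteratedDeriv j v b
            - iteratedDeriv (n - 1 - j) u a * iteratedDeriv j v a))
        + (-1 : ℂ) ^ n * ∫ x in a..b, u x * iteratedDeriv n v x
  | 0, u, v, hu, hv => by simp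
  | (n + 1), u, v, hu, hv => by
    have hucast : ((n + 1 : ℕ) : WithTop ℕ∞) = (n : WithTop ℕ∞) + 1 := by
      push_cast; rfl
    have hu' : ContDiff ℝ n (deriv u) := (contDiff_succ_iff_deriv.mp (hucast ▸ hu)).2.2
    have hv' : ContDiff ℝ n v := hv.of_le (by exact_mod_cast Nat.le_succ n)
    have ihh := ibp a b n (deriv u) v hu' hv'
    have hwdiff : ∀ x : ℝ, HasDerivAt (iteratedDeriv n v) (iteratedDeriv (n + 1) v x) x := by
      intro x
      rw [iteratedDeriv_succ]
      exact ((hv.differentiable_iteratedDeriv n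
        (by exact_mod_cast Nat.lt_succ_self n)) x).hasDerivAt
    have hudiff : ∀ x : ℝ, HasDerivAt u (deriv u x) x := fun x =>
      ((hu.differentiable (by simp)) x).hasDerivAt
    have hInt1 : IntervalIntegrable (iteratedDeriv (n + 1) v) volume a b :=
      (hv.continuous_iteratedDeriv (n + 1) le_rfl).intervalIntegrable a b
    have hInt2 : IntervalIntegrable (deriv u) volume a b :=
      hu'.continuous.intervalIntegrable a b
    have key := intervalIntegral.integral_mul_deriv_eq_deriv_mul
      (u := iteratedDeriv n v) (v := u) (u' := iteratedDeriv (n + 1) v) (v' := deriv u)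
      (fun x _ => hwdiff x) (fun x _ => hudiff x) hInt1 hInt2
    have hcomm : (∫ x in a..b, deriv u x * iteratedDeriv n v x)
        = ∫ x in a..b, iteratedDeriv n v x * deriv u x := by
      apply intervalIntegral.integral_congr
      intro x _
      exact mul_comm _ _
    calc ∫ x in a..b, iteratedDeriv (n + 1) u x * v x
        = ∫ x in a..b, iteratedDeriv n (deriv u) x * v x := by rw [iteratedDeriv_succ']
      _ = (∑ j ∈ Finset.range n, (-1 : ℂ) ^ j *
            (iteratedDeriv (n - 1 - j) (deriv u) b * iteratedDeriv j v b
              - iteratedDeriv (n - 1 - j) (deriv u) a * iteratedDeriv j v a))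
          + (-1 : ℂ) ^ n * ∫ x in a..b, deriv u x * iteratedDeriv n v x := ihh
      _ = (∑ j ∈ Finset.range n, (-1 : ℂ) ^ j *
            (iteratedDeriv (n - j) u b * iteratedDeriv j v b
              - iteratedDeriv (n - j) u a * iteratedDeriv j v a))
          + (-1 : ℂ) ^ n * (iteratedDeriv n v b * u b - iteratedDeriv n v a * u a
              - ∫ x in a..b, iteratedDeriv (n + 1) v x * u x) := by
        rw [hcomm, key]
        congr 1
        apply Finset.sum_congr rfl
        intro j hj
        have hj' : j < n := Finset.mem_range.mp hj
        have he : n - 1 - j + 1 = n - j := by omega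
        rw [← he, iteratedDeriv_succ']
      _ = (∑ j ∈ Finset.range (n + 1), (-1 : ℂ) ^ j *
            (iteratedDeriv (n + 1 - 1 - j) u b * iteratedDeriv j v b
              - iteratedDeriv (n + 1 - 1 - j) u a * iteratedDeriv j v a))
          + (-1 : ℂ) ^ (n + 1) * ∫ x in a..b, u x * iteratedDeriv (n + 1) v x := by
        rw [Finset.sum_range_succ]
        have h1 : ∀ j, n + 1 - 1 - j = n - j := by omega
        simp only [h1, Nat.sub_self, iteratedDeriv_zero]
        have h2 : (∫ x in a..b, iteratedDeriv (n + 1) v x * u x)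
            = ∫ x in a..b, u x * iteratedDeriv (n + 1) v x := by
          apply intervalIntegral.integral_congr
          intro x _
          exact mul_comm _ _
        rw [h2]
        ring

lemma two_eps (A B X : ℝ) (hA : 0 ≤ A) (hB : 0 ≤ B)
    (h : ∀ ε : ℝ, 0 < ε → X ≤ A / ε + B * ε) : X ≤ 2 * Real.sqrt (A * B) := by
  rcases eq_or_lt_of_le hB with hB0 | hB0
  · have hX : X ≤ 0 := by
      rcases eq_or_lt_of_le hA with hA0 | hA0
      · have h1 := h 1 one_pos
        rw [← hA0, ← hB0] at h1
        simpa using h1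
      · refine le_of_forall_pos_le_add fun ε hε => ?_
        have h1 := h (A / ε) (by positivity)
        rw [← hB0] at h1
        calc X ≤ A / (A / ε) + 0 * (A / ε) := h1
          _ = 0 + ε := by field_simp; ring
    have h2 : 0 ≤ 2 * Real.sqrt (A * B) := by positivity
    linarith
  · rcases eq_or_lt_of_le hA with hA0 | hA0
    · have hX : X ≤ 0 := by
        refine le_of_forall_pos_le_add fun ε hε => ?_
        have h1 := h (ε / B) (by positivity)
        rw [← hA0] at h1
        calc X ≤ 0 / (ε / B) + B * (ε / B) := h1
          _ = 0 + ε := by field_simp; ring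
      have h2 : 0 ≤ 2 * Real.sqrt (A * B) := by positivity
      linarith
    · have hsa : 0 < Real.sqrt A := Real.sqrt_pos.mpr hA0
      have hsb : 0 < Real.sqrt B := Real.sqrt_pos.mpr hB0
      have hsa2 : Real.sqrt A ^ 2 = A := Real.sq_sqrt hA0.le
      have hsb2 : Real.sqrt B ^ 2 = B := Real.sq_sqrt hB0.le
      have h1 := h (Real.sqrt A / Real.sqrt B) (by positivity)
      have hs : Real.sqrt (A * B) = Real.sqrt A * Real.sqrt B := Real.sqrt_mul hA0.le B
      have h2 : A / (Real.sqrt A / Real.sqrt B) + B * (Real.sqrt A / Real.sqrt B)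
          = 2 * (Real.sqrt A * Real.sqrt B) := by
        field_simp
        nlinarith [hsa2, hsb2]
      rw [hs]
      linarith [h1, h2]

lemma integral_norm_le_sqrt (a b : ℝ) (hab : a ≤ b) (f : ℝ → ℂ) (hf : Continuous f) :
    ∫ x in a..b, ‖f x‖ ≤ Real.sqrt (b - a) * Real.sqrt (∫ x in a..b, ‖f x‖ ^ 2) := by
  set J : ℝ := ∫ x in a..b, ‖f x‖ ^ 2 with hJdef
  have hJ : 0 ≤ J :=
    intervalIntegral.integral_nonneg hab (fun x _ => by positivity)
  have key : ∀ ε : ℝ, 0 < ε →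
      (∫ x in a..b, ‖f x‖) ≤ (J / 2) / ε + ((b - a) / 2) * ε := by
    intro ε hε
    have hpt : ∀ x, ‖f x‖ ≤ ‖f x‖ ^ 2 / (2 * ε) + ε / 2 := by
      intro x
      rw [div_add_div _ _ (by positivity) (two_ne_zero), le_div_iff₀ (by positivity)]
      nlinarith [sq_nonneg (‖f x‖ - ε)]
    have hint1 : IntervalIntegrable (fun x => ‖f x‖) volume a b :=
      hf.norm.intervalIntegrable a b
    have hint2 : IntervalIntegrable (fun x => ‖f x‖ ^ 2 / (2 * ε) + ε / 2) volume a b :=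
      (((hf.norm.pow 2).div_const _).add continuous_const).intervalIntegrable a b
    have hmono := intervalIntegral.integral_mono_on hab hint1 hint2 (fun x _ => hpt x)
    have heq : (∫ x in a..b, (‖f x‖ ^ 2 / (2 * ε) + ε / 2))
        = J / (2 * ε) + (b - a) * (ε / 2) := by
      rw [intervalIntegral.integral_add (f := fun x => ‖f x‖ ^ 2 / (2 * ε)) (g := fun _ => ε / 2)
        (((hf.norm.pow 2).div_const _).intervalIntegrable a b)
        (continuous_const.intervalIntegrable a b)]
      rw [intervalIntegral.integral_div, intervalIntegral.integral_const, smul_eq_mul]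
    rw [heq] at hmono
    calc (∫ x in a..b, ‖f x‖) ≤ J / (2 * ε) + (b - a) * (ε / 2) := hmono
      _ = (J / 2) / ε + ((b - a) / 2) * ε := by ring
  have h2 := two_eps (J / 2) ((b - a) / 2) _ (by linarith) (by linarith) key
  have h3 : 2 * Real.sqrt ((J / 2) * ((b - a) / 2)) = Real.sqrt (b - a) * Real.sqrt J := by
    have h1 : Real.sqrt (b - a) ^ 2 = b - a := Real.sq_sqrt (by linarith)
    have h2' : Real.sqrt J ^ 2 = J := Real.sq_sqrt hJ
    have h4 : (J / 2) * ((b - a) / 2) = ((Real.sqrt (b - a) * Real.sqrt J) / 2) ^ 2 := by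
      rw [div_pow, mul_pow, h1, h2']
      ring
    rw [h4, Real.sqrt_sq (by positivity)]
    ring
  rw [h3] at h2
  exact h2

lemma opt (s : ℕ) (hs : 1 ≤ s) (m X A B : ℝ) (hm : 0 < m) (hB : 0 ≤ B) (hBA : B ≤ A)
    (h : ∀ δ : ℝ, 0 < δ → δ ≤ m → X ≤ (A * δ ^ s + B) / Real.sqrt δ) :
    X ≤ (2 + 2 / Real.sqrt m) *
      (B ^ ((1 : ℝ) - 1 / (2 * (s : ℝ))) * A ^ ((1 : ℝ) / (2 * (s : ℝ)))) := by
  have hspos : (0 : ℝ) < s := by exact_mod_cast hs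
  have hs1 : (1 : ℝ) ≤ s := by exact_mod_cast hs
  set θ : ℝ := 1 / (2 * (s : ℝ)) with hθdef
  have hθpos : 0 < θ := by positivity
  have hθle : θ ≤ 1 / 2 := by
    rw [hθdef, div_le_div_iff₀ (by positivity) (by norm_num)]
    nlinarith
  have hA : 0 ≤ A := hB.trans hBA
  have hmge : 0 ≤ 2 / Real.sqrt m := by positivity
  rcases eq_or_lt_of_le hB with hB0 | hB0
  · -- B = 0
    have hX : X ≤ 0 := by
      rcases eq_or_lt_of_le hA with hA0 | hA0
      · have h1 := h m hm le_rfl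
        rw [← hA0, ← hB0] at h1
        simpa using h1
      · refine le_of_forall_pos_le_add fun ε hε => ?_
        set δ : ℝ := min m (min 1 ((ε / A) ^ 2)) with hδdef
        have hδpos : 0 < δ := lt_min hm (lt_min one_pos (by positivity))
        have hδm : δ ≤ m := min_le_left _ _
        have hδ1 : δ ≤ 1 := le_trans (min_le_right _ _) (min_le_left _ _)
        have hδε : δ ≤ (ε / A) ^ 2 := le_trans (min_le_right _ _) (min_le_right _ _)
        have h1 := h δ hδpos hδm
        rw [← hB0, add_zero] at h1
        have hsq : 0 < Real.sqrt δ := Real.sqrt_pos.mpr hδpos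
        have h2 : δ ^ s ≤ δ := by
          calc δ ^ s ≤ δ ^ 1 := pow_le_pow_of_le_one hδpos.le hδ1 hs
            _ = δ := pow_one δ
        have h3 : A * δ ^ s / Real.sqrt δ ≤ A * δ / Real.sqrt δ := by gcongr
        have h4 : A * δ / Real.sqrt δ = A * Real.sqrt δ := by
          rw [mul_div_assoc, Real.div_sqrt]
        have h5 : Real.sqrt δ ≤ ε / A := by
          calc Real.sqrt δ ≤ Real.sqrt ((ε / A) ^ 2) := Real.sqrt_le_sqrt hδε
            _ = ε / A := Real.sqrt_sq (by positivity)
        have h6 : A * Real.sqrt δ ≤ ε := by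
          calc A * Real.sqrt δ ≤ A * (ε / A) := by gcongr
            _ = ε := by field_simp
        linarith
    have hRHS : 0 ≤ (2 + 2 / Real.sqrt m) * (B ^ ((1:ℝ) - θ) * A ^ θ) := by
      apply mul_nonneg (by positivity)
      exact mul_nonneg (Real.rpow_nonneg hB _) (Real.rpow_nonneg hA _)
    linarith
  · -- B > 0
    have hApos : 0 < A := lt_of_lt_of_le hB0 hBA
    have hBApos : 0 < B / A := div_pos hB0 hApos
    have hBA1 : B / A ≤ 1 := (div_le_one hApos).mpr hBA
    set ρ : ℝ := (B / A) ^ ((1 : ℝ) / s) with hρdef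
    have hρpos : 0 < ρ := Real.rpow_pos_of_pos hBApos _
    have hρs : ρ ^ s = B / A := by
      rw [hρdef, ← Real.rpow_natCast ((B / A) ^ ((1:ℝ) / s)) s, ← Real.rpow_mul hBApos.le]
      rw [show (1 : ℝ) / s * s = 1 by field_simp, Real.rpow_one]
    have hsqrtρ : Real.sqrt ρ = (B / A) ^ θ := by
      rw [Real.sqrt_eq_rpow, hρdef, ← Real.rpow_mul hBApos.le]
      congr 1
      rw [hθdef]
      field_simp
    have hprod : 0 ≤ B ^ ((1:ℝ) - θ) * A ^ θ :=
      mul_nonneg (Real.rpow_nonneg hB _) (Real.rpow_nonneg hA _)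
    have hexpand : (2 + 2 / Real.sqrt m) * (B ^ ((1:ℝ) - θ) * A ^ θ)
        = 2 * (B ^ ((1:ℝ) - θ) * A ^ θ) + (2 / Real.sqrt m) * (B ^ ((1:ℝ) - θ) * A ^ θ) := by
      ring
    have hq2 : 0 ≤ (2 / Real.sqrt m) * (B ^ ((1:ℝ) - θ) * A ^ θ) := mul_nonneg hmge hprod
    by_cases hρm : ρ ≤ m
    · have h1 := h ρ hρpos hρm
      have h2 : A * ρ ^ s + B = 2 * B := by
        rw [hρs]
        field_simp
        ring
      rw [h2] at h1
      have hBθ : (0:ℝ) < B ^ θ := Real.rpow_pos_of_pos hB0 _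
      have hAθ : (0:ℝ) < A ^ θ := Real.rpow_pos_of_pos hApos _
      have h3 : 2 * B / Real.sqrt ρ = 2 * (B ^ ((1:ℝ) - θ) * A ^ θ) := by
        rw [hsqrtρ, Real.div_rpow hB hApos.le, Real.rpow_sub hB0, Real.rpow_one]
        field_simp
      rw [h3] at h1
      linarith
    · push_neg at hρm
      have h1 := h m hm le_rfl
      have hsqm : 0 < Real.sqrt m := Real.sqrt_pos.mpr hm
      have hmsle : A * m ^ s ≤ B := by
        have hps : m ^ s ≤ ρ ^ s := pow_le_pow_left₀ hm.le hρm.le s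
        rw [hρs] at hps
        calc A * m ^ s ≤ A * (B / A) := by gcongr
          _ = B := by field_simp
      have h3 : X ≤ 2 * B / Real.sqrt m := by
        refine h1.trans ?_
        gcongr
        linarith
      have hBθ : B ^ θ ≤ A ^ θ := Real.rpow_le_rpow hB hBA hθpos.le
      have h4 : B ≤ B ^ ((1:ℝ) - θ) * A ^ θ := by
        calc B = B ^ ((1:ℝ) - θ + θ) := by rw [sub_add_cancel, Real.rpow_one]
          _ = B ^ ((1:ℝ) - θ) * B ^ θ := Real.rpow_add hB0 _ _
          _ ≤ B ^ ((1:ℝ) - θ) * A ^ θ := by gcongr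
      calc X ≤ 2 * B / Real.sqrt m := h3
        _ = (2 / Real.sqrt m) * B := by ring
        _ ≤ (2 / Real.sqrt m) * (B ^ ((1:ℝ) - θ) * A ^ θ) := by gcongr
        _ ≤ (2 + 2 / Real.sqrt m) * (B ^ ((1:ℝ) - θ) * A ^ θ) := by
            rw [hexpand]
            linarith

/-- Endpoint interpolation inequality: for `b > 0` and `s ∈ ℕ`, `s ≥ 1`, there is a constant
`C > 0` (depending on `b` and `s`) such that for every `φ ∈ H^s((0,b);ℂ)` (here represented
by an `s`-times continuously differentiable function),
`|φ(b)| ≤ C ‖φ‖_{L²(0,b)}^{1 − 1/(2s)} ‖φ‖_{H^s(0,b)}^{1/(2s)}`. -/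
theorem endpoint_interpolation (b : ℝ) (hb : 0 < b) (s : ℕ) (hs : 1 ≤ s) :
    ∃ C : ℝ, 0 < C ∧ ∀ φ : ℝ → ℂ, ContDiff ℝ s φ →
      ‖φ b‖ ≤ C *
        (Real.sqrt (∫ y in (0:ℝ)..b, ‖φ y‖ ^ 2)) ^ ((1 : ℝ) - 1 / (2 * (s : ℝ))) *
        (Real.sqrt (∑ j ∈ Finset.range (s + 1),
            ∫ y in (0:ℝ)..b, ‖iteratedDeriv j φ y‖ ^ 2)) ^ (1 / (2 * (s : ℝ))) := by
  set K : ℝ := 2 ^ s * (2 * (s : ℝ)) ^ s with hKdef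
  have hs1 : (1 : ℝ) ≤ (s : ℝ) := by exact_mod_cast hs
  have hK1 : 1 ≤ K := by
    have h1 : (1 : ℝ) ≤ 2 ^ s := one_le_pow₀ (by norm_num)
    have h2 : (1 : ℝ) ≤ (2 * (s : ℝ)) ^ s := one_le_pow₀ (by nlinarith)
    nlinarith
  have hKpos : 0 < K := by linarith
  refine ⟨(2 + 2 / Real.sqrt b) * K, by positivity, ?_⟩
  intro φ hφ
  set L : ℝ := Real.sqrt (∫ y in (0:ℝ)..b, ‖φ y‖ ^ 2) with hLdef
  set H : ℝ := Real.sqrt (∑ j ∈ Finset.range (s + 1),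
      ∫ y in (0:ℝ)..b, ‖iteratedDeriv j φ y‖ ^ 2) with hHdef
  have hL0 : 0 ≤ L := Real.sqrt_nonneg _
  have hH0 : 0 ≤ H := Real.sqrt_nonneg _
  have hjint : ∀ j : ℕ, (0:ℝ) ≤ ∫ y in (0:ℝ)..b, ‖iteratedDeriv j φ y‖ ^ 2 := fun j =>
    intervalIntegral.integral_nonneg hb.le (fun x _ => sq_nonneg _)
  have hLH : L ≤ H := by
    apply Real.sqrt_le_sqrt
    have h0 : (∫ y in (0:ℝ)..b, ‖φ y‖ ^ 2)
        = ∫ y in (0:ℝ)..b, ‖iteratedDeriv 0 φ y‖ ^ 2 := by rw [iteratedDeriv_zero]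
    rw [h0]
    exact Finset.single_le_sum (f := fun j => ∫ y in (0:ℝ)..b, ‖iteratedDeriv j φ y‖ ^ 2)
      (fun j _ => hjint j) (Finset.mem_range.mpr (Nat.succ_pos s))
  -- the key scaled estimate
  have hstar : ∀ δ : ℝ, 0 < δ → δ ≤ b →
      ‖φ b‖ ≤ (K * H * δ ^ s + K * L) / Real.sqrt δ := by
    intro δ hδ hδb
    set a : ℝ := b - δ with hadef
    have hab : a ≤ b := by rw [hadef]; linarith
    have ha0 : 0 ≤ a := by rw [hadef]; linarith
    have hδne : δ ≠ 0 := ne_of_gt hδ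
    have hsδ : 0 < Real.sqrt δ := Real.sqrt_pos.mpr hδ
    set c : ℂ := ((-1 : ℂ)) ^ (s - 1) / (((s - 1).factorial : ℂ) * (δ : ℂ) ^ s) with hcdef
    set g : ℝ → ℂ :=
      fun t => c * ((t : ℂ) - (a : ℂ)) ^ s * ((t : ℂ) - (b : ℂ)) ^ (s - 1) with hgdef
    have hfact1 : (1 : ℝ) ≤ ((s - 1).factorial : ℝ) := by
      exact_mod_cast Nat.one_le_iff_ne_zero.mpr (s - 1).factorial_ne_zero
    have hcnorm : ‖c‖ ≤ 1 / δ ^ s := by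
      rw [hcdef, norm_div, norm_pow, norm_neg, norm_one, one_pow, norm_mul,
        Complex.norm_natCast, norm_pow, Complex.norm_real, Real.norm_eq_abs, abs_of_pos hδ]
      exact one_div_le_one_div_of_le (by positivity)
        (le_mul_of_one_le_left (by positivity) hfact1)
    -- expansion around b
    have hgB : ∀ t : ℝ, g t = ∑ k ∈ Finset.range (s + 1),
        (c * ((s.choose k : ℕ) : ℂ) * (δ : ℂ) ^ (s - k)) * (((t : ℂ) - (b : ℂ)) ^ (s - 1 + k)) := by
      intro t
      have e : ((t : ℂ) - (a : ℂ)) = ((t : ℂ) - (b : ℂ)) + (δ : ℂ) := by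
        rw [hadef]; push_cast; ring
      simp only [hgdef]
      rw [e, add_pow, Finset.mul_sum, Finset.sum_mul]
      refine Finset.sum_congr rfl fun k _ => ?_
      rw [pow_add]
      ring
    -- expansion around a
    have hgA : ∀ t : ℝ, g t = ∑ i ∈ Finset.range s,
        (c * (((s - 1).choose i : ℕ) : ℂ) * (-(δ : ℂ)) ^ (s - 1 - i))
          * (((t : ℂ) - (a : ℂ)) ^ (s + i)) := by
      intro t
      have e : ((t : ℂ) - (b : ℂ)) = ((t : ℂ) - (a : ℂ)) + (-(δ : ℂ)) := by
        rw [hadef]; push_cast; ring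
      simp only [hgdef]
      rw [e, add_pow, Nat.sub_add_cancel hs, Finset.mul_sum]
      refine Finset.sum_congr rfl fun i _ => ?_
      rw [pow_add]
      ring
    have hitdB : ∀ (j : ℕ) (x : ℝ), iteratedDeriv j g x = ∑ k ∈ Finset.range (s + 1),
        ((c * ((s.choose k : ℕ) : ℂ) * (δ : ℂ) ^ (s - k)) * (((s - 1 + k).descFactorial j : ℕ) : ℂ))
          * (((x : ℂ) - (b : ℂ)) ^ (s - 1 + k - j)) := by
      intro j x
      rw [funext hgB]
      exact iteratedDeriv_sum_mono (s + 1) j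
        (fun k => c * ((s.choose k : ℕ) : ℂ) * (δ : ℂ) ^ (s - k)) ((b : ℝ) : ℂ)
        (fun k => s - 1 + k) x
    have hitdA : ∀ (j : ℕ) (x : ℝ), iteratedDeriv j g x = ∑ i ∈ Finset.range s,
        ((c * (((s - 1).choose i : ℕ) : ℂ) * (-(δ : ℂ)) ^ (s - 1 - i))
            * (((s + i).descFactorial j : ℕ) : ℂ))
          * (((x : ℂ) - (a : ℂ)) ^ (s + i - j)) := by
      intro j x
      rw [funext hgA]
      exact iteratedDeriv_sum_mono s j
        (fun i => c * (((s - 1).choose i : ℕ) : ℂ) * (-(δ : ℂ)) ^ (s - 1 - i)) ((a : ℝ) : ℂ)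
        (fun i => s + i) x
    have hA0 : ∀ j, j < s → iteratedDeriv j g a = 0 := by
      intro j hj
      rw [hitdA j a]
      apply Finset.sum_eq_zero
      intro i _
      rw [sub_self, zero_pow (by omega : s + i - j ≠ 0), mul_zero]
    have hBlt : ∀ j, j < s - 1 → iteratedDeriv j g b = 0 := by
      intro j hj
      rw [hitdB j b]
      apply Finset.sum_eq_zero
      intro k _
      rw [sub_self, zero_pow (by omega : s - 1 + k - j ≠ 0), mul_zero]
    have hBtop : iteratedDeriv (s - 1) g b = c * (δ : ℂ) ^ s * (((s - 1).factorial : ℕ) : ℂ) := by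
      rw [hitdB (s - 1) b]
      rw [Finset.sum_eq_single_of_mem 0 (Finset.mem_range.mpr (Nat.succ_pos s))]
      · rw [sub_self, show s - 1 + 0 - (s - 1) = 0 from by omega, pow_zero, mul_one,
          Nat.choose_zero_right, Nat.add_zero, Nat.descFactorial_self, Nat.sub_zero]
        push_cast
        ring
      · intro k _ hk0
        rw [sub_self, show s - 1 + k - (s - 1) = k from by omega, zero_pow hk0, mul_zero]
    have hgcd : ContDiff ℝ s g := by
      rw [hgdef]
      exact (contDiff_mono' c ((a : ℝ) : ℂ) s).mul
        ((contDiff_ofReal.sub contDiff_const).pow (s - 1))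
    have hibp := ibp a b s φ g hφ hgcd
    have hSsum : (∑ j ∈ Finset.range s, (-1 : ℂ) ^ j *
          (iteratedDeriv (s - 1 - j) φ b * iteratedDeriv j g b
            - iteratedDeriv (s - 1 - j) φ a * iteratedDeriv j g a)) = φ b := by
      rw [Finset.sum_eq_single_of_mem (s - 1) (Finset.mem_range.mpr (by omega))]
      · rw [hBtop, hA0 (s - 1) (by omega), Nat.sub_self, iteratedDeriv_zero, mul_zero, sub_zero]
        have hne1 : (((s - 1).factorial : ℕ) : ℂ) ≠ 0 := by
          exact_mod_cast (s - 1).factorial_ne_zero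
        have hne2 : ((δ : ℝ) : ℂ) ≠ 0 := Complex.ofReal_ne_zero.mpr hδne
        have hpow : ((-1 : ℂ)) ^ (s - 1) * ((-1 : ℂ)) ^ (s - 1) = 1 := by
          rw [← pow_add]
          exact Even.neg_one_pow ⟨s - 1, rfl⟩
        calc (-1 : ℂ) ^ (s - 1) * (φ b * (c * (δ : ℂ) ^ s * (((s - 1).factorial : ℕ) : ℂ)))
            = φ b * (((-1 : ℂ) ^ (s - 1) * (-1 : ℂ) ^ (s - 1)) *
              (((((s - 1).factorial : ℕ) : ℂ) * (δ : ℂ) ^ s)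
                / ((((s - 1).factorial : ℕ) : ℂ) * (δ : ℂ) ^ s))) := by
              rw [hcdef]; ring
          _ = φ b := by
              rw [hpow, div_self (mul_ne_zero hne1 (pow_ne_zero _ hne2))]
              ring
      · intro j hj hjne
        have hj' : j < s := Finset.mem_range.mp hj
        rw [hA0 j hj', hBlt j (by omega), mul_zero, mul_zero, sub_zero, mul_zero]
    have hrepr : φ b = (∫ x in a..b, iteratedDeriv s φ x * g x)
        - (-1 : ℂ) ^ s * ∫ x in a..b, φ x * iteratedDeriv s g x := by
      rw [hibp, hSsum]
      ring
    have hnormsplit : ‖φ b‖ ≤ ‖∫ x in a..b, iteratedDeriv s φ x * g x‖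
        + ‖∫ x in a..b, φ x * iteratedDeriv s g x‖ := by
      rw [hrepr]
      refine (norm_sub_le _ _).trans ?_
      gcongr
      rw [norm_mul, norm_pow, norm_neg, norm_one, one_pow, one_mul]
    have habs : ∀ x ∈ Set.Icc a b,
        ‖((x : ℂ) - (a : ℂ))‖ ≤ δ ∧ ‖((x : ℂ) - (b : ℂ))‖ ≤ δ := by
      intro x hx
      obtain ⟨h1, h2⟩ := hx
      constructor
      · rw [show ((x : ℂ) - (a : ℂ)) = ((x - a : ℝ) : ℂ) from by push_cast; ring,
          Complex.norm_real, Real.norm_eq_abs, abs_of_nonneg (by linarith)]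
        rw [hadef] at h1 ⊢
        linarith
      · rw [show ((x : ℂ) - (b : ℂ)) = ((x - b : ℝ) : ℂ) from by push_cast; ring,
          Complex.norm_real, Real.norm_eq_abs, abs_of_nonpos (by linarith)]
        rw [hadef] at h1
        linarith
    have hgbound : ∀ x ∈ Set.Icc a b, ‖g x‖ ≤ δ ^ (s - 1) := by
      intro x hx
      obtain ⟨hxa', hxb'⟩ := habs x hx
      simp only [hgdef]
      rw [norm_mul, norm_mul, norm_pow, norm_pow]
      calc ‖c‖ * ‖(x : ℂ) - (a : ℂ)‖ ^ s * ‖(x : ℂ) - (b : ℂ)‖ ^ (s - 1)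
          ≤ (1 / δ ^ s) * δ ^ s * δ ^ (s - 1) := by gcongr <;> positivity
        _ = δ ^ (s - 1) := by field_simp
    have hgsbound : ∀ x ∈ Set.Icc a b, ‖iteratedDeriv s g x‖ ≤ K / δ := by
      intro x hx
      obtain ⟨hxa', hxb'⟩ := habs x hx
      rw [hitdB s x]
      refine (norm_sum_le _ _).trans ?_
      have hterm : ∀ k ∈ Finset.range (s + 1),
          ‖((c * ((s.choose k : ℕ) : ℂ) * (δ : ℂ) ^ (s - k))
                * (((s - 1 + k).descFactorial s : ℕ) : ℂ))
              * (((x : ℂ) - (b : ℂ)) ^ (s - 1 + k - s))‖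
            ≤ ((s.choose k : ℕ) : ℝ) * (2 * (s : ℝ)) ^ s / δ := by
        intro k hk
        have hks : k ≤ s := by
          have := Finset.mem_range.mp hk
          omega
        rcases Nat.eq_zero_or_pos k with hk0 | hkpos
        · subst hk0
          have hdf : (s - 1 + 0).descFactorial s = 0 :=
            Nat.descFactorial_eq_zero_iff_lt.mpr (by omega)
          rw [hdf]
          simp only [Nat.cast_zero, mul_zero, zero_mul, norm_zero]
          positivity
        · simp only [norm_mul, norm_pow, Complex.norm_natCast, Complex.norm_real,
            Real.norm_eq_abs]
          rw [abs_of_pos hδ]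
          have hdf1 : (((s - 1 + k).descFactorial s : ℕ) : ℝ) ≤ (((s - 1 + k : ℕ) : ℝ)) ^ s := by
            exact_mod_cast Nat.descFactorial_le_pow (s - 1 + k) s
          have hdf2 : (((s - 1 + k : ℕ) : ℝ)) ≤ 2 * (s : ℝ) := by
            have h2s : ((s - 1 + k : ℕ) : ℝ) ≤ ((2 * s : ℕ) : ℝ) := by
              exact_mod_cast (by omega : s - 1 + k ≤ 2 * s)
            have h2s' : ((2 * s : ℕ) : ℝ) = 2 * (s : ℝ) := by push_cast; ring
            linarith [h2s, h2s'.le, h2s'.ge]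
          have hdf : (((s - 1 + k).descFactorial s : ℕ) : ℝ) ≤ (2 * (s : ℝ)) ^ s :=
            hdf1.trans (pow_le_pow_left₀ (by positivity) hdf2 s)
          have hxbpow : ‖(x : ℂ) - (b : ℂ)‖ ^ (s - 1 + k - s) ≤ δ ^ (s - 1 + k - s) :=
            pow_le_pow_left₀ (norm_nonneg _) hxb' _
          calc ‖c‖ * ((s.choose k : ℕ) : ℝ) * δ ^ (s - k)
                * (((s - 1 + k).descFactorial s : ℕ) : ℝ)
                * ‖(x : ℂ) - (b : ℂ)‖ ^ (s - 1 + k - s)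
              ≤ (1 / δ ^ s) * ((s.choose k : ℕ) : ℝ) * δ ^ (s - k) * ((2 * (s : ℝ)) ^ s)
                * δ ^ (s - 1 + k - s) := by gcongr <;> positivity
            _ = ((s.choose k : ℕ) : ℝ) * (2 * (s : ℝ)) ^ s
                * (δ ^ (s - k) * δ ^ (s - 1 + k - s) / δ ^ s) := by ring
            _ = ((s.choose k : ℕ) : ℝ) * (2 * (s : ℝ)) ^ s / δ := by
                rw [← pow_add, show s - k + (s - 1 + k - s) = s - 1 from by omega,
                  show δ ^ s = δ ^ (s - 1) * δ from by rw [← pow_succ, Nat.sub_add_cancel hs],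
                  div_mul_eq_div_div, div_self (ne_of_gt (by positivity))]
                ring
      refine (Finset.sum_le_sum hterm).trans ?_
      rw [← Finset.sum_div, ← Finset.sum_mul]
      have hch : (∑ k ∈ Finset.range (s + 1), ((s.choose k : ℕ) : ℝ)) = ((2 ^ s : ℕ) : ℝ) := by
        exact_mod_cast Nat.sum_range_choose s
      rw [hch, hKdef]
      apply le_of_eq
      push_cast
      ring
    have hφscont : Continuous (iteratedDeriv s φ) := hφ.continuous_iteratedDeriv s le_rfl
    have hφcont : Continuous φ := hφ.continuous
    have hgcont : Continuous g := hgcd.continuous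
    have hgscont : Continuous (iteratedDeriv s g) := hgcd.continuous_iteratedDeriv s le_rfl
    have hI1 : ‖∫ x in a..b, iteratedDeriv s φ x * g x‖
        ≤ δ ^ (s - 1) * ∫ x in a..b, ‖iteratedDeriv s φ x‖ := by
      refine (intervalIntegral.norm_integral_le_integral_norm hab).trans ?_
      have hmono : ∀ x ∈ Set.Icc a b,
          ‖iteratedDeriv s φ x * g x‖ ≤ δ ^ (s - 1) * ‖iteratedDeriv s φ x‖ := by
        intro x hx
        rw [norm_mul]
        calc ‖iteratedDeriv s φ x‖ * ‖g x‖
            ≤ ‖iteratedDeriv s φ x‖ * δ ^ (s - 1) :=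
              mul_le_mul_of_nonneg_left (hgbound x hx) (norm_nonneg _)
          _ = δ ^ (s - 1) * ‖iteratedDeriv s φ x‖ := mul_comm _ _
      calc (∫ x in a..b, ‖iteratedDeriv s φ x * g x‖)
          ≤ ∫ x in a..b, δ ^ (s - 1) * ‖iteratedDeriv s φ x‖ :=
            intervalIntegral.integral_mono_on hab
              ((hφscont.mul hgcont).norm.intervalIntegrable a b)
              ((continuous_const.mul hφscont.norm).intervalIntegrable a b) hmono
        _ = δ ^ (s - 1) * ∫ x in a..b, ‖iteratedDeriv s φ x‖ := by
            rw [intervalIntegral.integral_const_mul]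
    have hI2 : ‖∫ x in a..b, φ x * iteratedDeriv s g x‖
        ≤ (K / δ) * ∫ x in a..b, ‖φ x‖ := by
      refine (intervalIntegral.norm_integral_le_integral_norm hab).trans ?_
      have hmono : ∀ x ∈ Set.Icc a b,
          ‖φ x * iteratedDeriv s g x‖ ≤ (K / δ) * ‖φ x‖ := by
        intro x hx
        rw [norm_mul]
        calc ‖φ x‖ * ‖iteratedDeriv s g x‖
            ≤ ‖φ x‖ * (K / δ) := mul_le_mul_of_nonneg_left (hgsbound x hx) (norm_nonneg _)
          _ = (K / δ) * ‖φ x‖ := mul_comm _ _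
      calc (∫ x in a..b, ‖φ x * iteratedDeriv s g x‖)
          ≤ ∫ x in a..b, (K / δ) * ‖φ x‖ :=
            intervalIntegral.integral_mono_on hab
              ((hφcont.mul hgscont).norm.intervalIntegrable a b)
              ((continuous_const.mul hφcont.norm).intervalIntegrable a b) hmono
        _ = (K / δ) * ∫ x in a..b, ‖φ x‖ := by
            rw [intervalIntegral.integral_const_mul]
    have hba : b - a = δ := by rw [hadef]; ring
    have hCS1 : (∫ x in a..b, ‖iteratedDeriv s φ x‖) ≤ Real.sqrt δ * H := by
      refine (integral_norm_le_sqrt a b hab _ hφscont).trans ?_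
      rw [hba]
      have hX : (∫ x in a..b, ‖iteratedDeriv s φ x‖ ^ 2)
          ≤ ∑ j ∈ Finset.range (s + 1), ∫ y in (0:ℝ)..b, ‖iteratedDeriv j φ y‖ ^ 2 := by
        calc (∫ x in a..b, ‖iteratedDeriv s φ x‖ ^ 2)
            ≤ ∫ y in (0:ℝ)..b, ‖iteratedDeriv s φ y‖ ^ 2 :=
              intervalIntegral.integral_mono_interval ha0 hab le_rfl
                (Filter.Eventually.of_forall fun x => sq_nonneg _)
                ((hφscont.norm.pow 2).intervalIntegrable 0 b)
          _ ≤ _ := Finset.single_le_sum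
              (f := fun j => ∫ y in (0:ℝ)..b, ‖iteratedDeriv j φ y‖ ^ 2)
              (fun j _ => hjint j) (Finset.mem_range.mpr (by omega))
      rw [hHdef]
      gcongr
    have hCS2 : (∫ x in a..b, ‖φ x‖) ≤ Real.sqrt δ * L := by
      refine (integral_norm_le_sqrt a b hab _ hφcont).trans ?_
      rw [hba]
      have hX : (∫ x in a..b, ‖φ x‖ ^ 2) ≤ ∫ y in (0:ℝ)..b, ‖φ y‖ ^ 2 :=
        intervalIntegral.integral_mono_interval ha0 hab le_rfl
          (Filter.Eventually.of_forall fun x => sq_nonneg _)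
          ((hφcont.norm.pow 2).intervalIntegrable 0 b)
      rw [hLdef]
      gcongr
    have hsδ2 : Real.sqrt δ * Real.sqrt δ = δ := Real.mul_self_sqrt hδ.le
    have e1 : δ ^ (s - 1) * (Real.sqrt δ * H) = δ ^ s * H / Real.sqrt δ := by
      rw [show δ ^ s = δ ^ (s - 1) * δ from by rw [← pow_succ, Nat.sub_add_cancel hs],
        eq_div_iff (ne_of_gt hsδ)]
      linear_combination (δ ^ (s - 1) * H) * hsδ2
    have e2 : (K / δ) * (Real.sqrt δ * L) = K * L / Real.sqrt δ := by
      rw [eq_div_iff (ne_of_gt hsδ)]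
      field_simp
      linear_combination L * hsδ2
    calc ‖φ b‖ ≤ ‖∫ x in a..b, iteratedDeriv s φ x * g x‖
          + ‖∫ x in a..b, φ x * iteratedDeriv s g x‖ := hnormsplit
      _ ≤ δ ^ (s - 1) * (Real.sqrt δ * H) + (K / δ) * (Real.sqrt δ * L) := by
          apply add_le_add
          · exact hI1.trans (mul_le_mul_of_nonneg_left hCS1 (by positivity))
          · exact hI2.trans (mul_le_mul_of_nonneg_left hCS2 (by positivity))
      _ = (δ ^ s * H + K * L) / Real.sqrt δ := by rw [e1, e2, ← add_div]
      _ ≤ (K * H * δ ^ s + K * L) / Real.sqrt δ := by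
          rw [div_le_div_iff_of_pos_right hsδ]
          nlinarith [mul_nonneg hH0 (pow_nonneg hδ.le s), hK1]
  have hfin := opt s hs b ‖φ b‖ (K * H) (K * L) hb (by positivity)
    (by gcongr) hstar
  have heq : (K * L) ^ ((1:ℝ) - 1 / (2 * (s:ℝ))) * (K * H) ^ ((1:ℝ) / (2 * (s:ℝ)))
      = K * (L ^ ((1:ℝ) - 1 / (2 * (s:ℝ))) * H ^ ((1:ℝ) / (2 * (s:ℝ)))) := by
    rw [Real.mul_rpow hKpos.le hL0, Real.mul_rpow hKpos.le hH0,
      show K ^ ((1:ℝ) - 1 / (2 * (s:ℝ))) * L ^ ((1:ℝ) - 1 / (2 * (s:ℝ)))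
          * (K ^ ((1:ℝ) / (2 * (s:ℝ))) * H ^ ((1:ℝ) / (2 * (s:ℝ))))
        = (K ^ ((1:ℝ) - 1 / (2 * (s:ℝ))) * K ^ ((1:ℝ) / (2 * (s:ℝ))))
          * (L ^ ((1:ℝ) - 1 / (2 * (s:ℝ))) * H ^ ((1:ℝ) / (2 * (s:ℝ)))) from by ring,
      ← Real.rpow_add hKpos, sub_add_cancel, Real.rpow_one]
  calc ‖φ b‖ ≤ (2 + 2 / Real.sqrt b) *
        ((K * L) ^ ((1:ℝ) - 1 / (2 * (s:ℝ))) * (K * H) ^ ((1:ℝ) / (2 * (s:ℝ)))) := hfin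
    _ = (2 + 2 / Real.sqrt b) * K *
        (L ^ ((1:ℝ) - 1 / (2 * (s:ℝ)))) * (H ^ ((1:ℝ) / (2 * (s:ℝ)))) := by
        rw [heq]; ring
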